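/- For every real number s with -1 < s < 0, the improper integral ∫₀^∞ r^s cos(r) dr converges (as a limit of ∫₀^R as R → ∞) and equals -Γ(1+s) sin(sπ/2). -/

import Mathlib

open Real Filter intervalIntegral MeasureTheory Set

-- Antiderivative computation: ∫ x in 0..R, e^{-xt} cos x
lemma aux_inner (t R : ℝ) :
    ∫ x in (0:ℝ)..R, Real.exp (-(x*t)) * Real.cos x
      = (t + Real.exp (-(R*t)) * (Real.sin R - t * Real.cos R)) / (1 + t^2) := by
  have ht : (1 : ℝ) + t^2 ≠ 0 := by positivity
  have key : ∀ x : ℝ, HasDerivAt (fun x => Real.exp (-(x*t)) * (Real.sin x - t * Real.cos x) / (1 + t^2))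
      (Real.exp (-(x*t)) * Real.cos x) x := by
    intro x
    have h1 : HasDerivAt (fun x : ℝ => -(x*t)) (-t) x := by
      exact ((hasDerivAt_id' x).mul_const t).neg.congr_deriv (by ring)
    have h2 : HasDerivAt (fun x : ℝ => Real.exp (-(x*t))) (Real.exp (-(x*t)) * (-t)) x :=
      (Real.hasDerivAt_exp _).comp x h1
    have h3 : HasDerivAt (fun x : ℝ => Real.sin x - t * Real.cos x)
        (Real.cos x + t * Real.sin x) x := by
      have := (Real.hasDerivAt_sin x).sub ((Real.hasDerivAt_cos x).const_mul t)
      exact this.congr_deriv (by ring)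
    have h4 := (h2.mul h3).div_const (1 + t^2)
    refine h4.congr_deriv ?_
    rw [div_eq_iff ht]
    ring
  rw [intervalIntegral.integral_eq_sub_of_hasDerivAt (fun x _ => key x)
    (by apply Continuous.intervalIntegrable; continuity)]
  simp [Real.sin_zero, Real.cos_zero]
  ring

-- kernel integrability
lemma aux_ker_integrable {a x : ℝ} (ha : 0 < a) (hx : 0 < x) :
    IntegrableOn (fun t : ℝ => t ^ (a - 1) * Real.exp (-(x*t))) (Ioi 0) := by
  have hg : IntegrableOn (fun u : ℝ => Real.exp (-u) * u ^ (a - 1)) (Ioi 0) :=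
    Real.GammaIntegral_convergent ha
  have h2 : IntegrableOn (fun t : ℝ => Real.exp (-(x*t)) * (x*t) ^ (a - 1)) (Ioi 0) := by
    have := (integrableOn_Ioi_comp_mul_left_iff
      (fun u : ℝ => Real.exp (-u) * u ^ (a - 1)) 0 hx).2 (by simpa using hg)
    simpa using this
  have h3 := (h2.const_mul (x ^ (1 - a)))
  refine IntegrableOn.congr_fun h3 (fun t ht => ?_) measurableSet_Ioi
  rw [mem_Ioi] at ht
  rw [Real.mul_rpow hx.le ht.le]
  have hxx : x ^ (1 - a) * x ^ (a - 1) = 1 := by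
    rw [← Real.rpow_add hx]; norm_num
  linear_combination (Real.exp (-(x*t)) * t ^ (a-1)) * hxx

-- kernel value
lemma aux_ker (s : ℝ) (hs0 : s < 0) {x : ℝ} (hx : 0 < x) :
    ∫ t in Ioi (0:ℝ), t ^ (-s - 1) * Real.exp (-(x*t)) = Real.Gamma (-s) * x ^ s := by
  rw [integral_rpow_mul_exp_neg_mul_Ioi (by linarith) hx]
  rw [one_div, ← Real.rpow_neg_one, ← Real.rpow_mul hx.le]
  norm_num [mul_comm]

-- beta value
lemma aux_beta {c : ℝ} (hc0 : 0 < c) (hc1 : c < 1) :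
    ∫ u in Ioi (0:ℝ), u ^ (c - 1) / (1 + u) = π / Real.sin (π * c) := by
  -- Step 1: the real Beta integral value
  have hreal : ∫ x in (0:ℝ)..1, x ^ (c - 1) * (1 - x) ^ (-c) = π / Real.sin (π * c) := by
    have hc : 0 < (c:ℂ).re := by simpa using hc0
    have hc' : 0 < ((1:ℂ) - c).re := by simp [hc1]
    have hB := Complex.Gamma_mul_Gamma_eq_betaIntegral hc hc'
    rw [show (c:ℂ) + (1 - c) = 1 by ring, Complex.Gamma_one, one_mul] at hB
    have hrefl := Complex.Gamma_mul_Gamma_one_sub (c:ℂ)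
    rw [hrefl] at hB
    have hofReal : Complex.betaIntegral c (1 - c)
        = ((∫ x in (0:ℝ)..1, x ^ (c - 1) * (1 - x) ^ (-c) : ℝ) : ℂ) := by
      rw [Complex.betaIntegral, ← intervalIntegral.integral_ofReal]
      refine intervalIntegral.integral_congr (fun x hx => ?_)
      rw [uIcc_of_le zero_le_one] at hx
      rw [show ((c:ℂ) - 1) = ((c - 1 : ℝ) : ℂ) by push_cast; ring,
        show ((1:ℂ) - c - 1) = ((-c : ℝ) : ℂ) by push_cast; ring,
        show ((1:ℂ) - (x:ℂ)) = ((1 - x : ℝ) : ℂ) by push_cast; ring,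
        ← Complex.ofReal_cpow hx.1, ← Complex.ofReal_cpow (by linarith [hx.2]),
        ← Complex.ofReal_mul]
    rw [hofReal] at hB
    have hsin : Complex.sin (π * c) = (Real.sin (π * c) : ℂ) := by
      rw [show ((π:ℂ) * (c:ℂ)) = ((π * c : ℝ) : ℂ) by push_cast; ring, ← Complex.ofReal_sin]
    rw [hsin] at hB
    have : ((π / Real.sin (π * c) : ℝ) : ℂ)
        = ((∫ x in (0:ℝ)..1, x ^ (c - 1) * (1 - x) ^ (-c) : ℝ) : ℂ) := by
      rw [← hB]; push_cast; ring
    exact_mod_cast this.symm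
  -- Step 2: change of variables x = u / (1 + u)
  have himg : (fun u : ℝ => u / (1 + u)) '' Ioi 0 = Ioo 0 1 := by
    ext y
    constructor
    · rintro ⟨u, hu, rfl⟩
      rw [mem_Ioi] at hu
      constructor
      · positivity
      · rw [div_lt_one (by linarith)]; linarith
    · rintro ⟨hy0, hy1⟩
      have h1y : (0:ℝ) < 1 - y := by linarith
      refine ⟨y / (1 - y), div_pos hy0 h1y, ?_⟩
      show y / (1 - y) / (1 + y / (1 - y)) = y
      rw [show 1 + y / (1 - y) = 1 / (1 - y) by field_simp; ring, one_div]
      field_simp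
  have hderiv : ∀ u ∈ Ioi (0:ℝ), HasDerivWithinAt (fun u : ℝ => u / (1 + u))
      (1 / (1 + u)^2) (Ioi 0) u := by
    intro u hu
    rw [mem_Ioi] at hu
    have hden : HasDerivAt (fun u : ℝ => 1 + u) 1 u := by
      simpa using (hasDerivAt_id u).const_add (1:ℝ)
    have h1 := (hasDerivAt_id u).div hden (by linarith : (1:ℝ) + u ≠ 0)
    refine HasDerivAt.hasDerivWithinAt ?_
    refine h1.congr_deriv ?_
    simp only [id]
    ring
  have hinj : InjOn (fun u : ℝ => u / (1 + u)) (Ioi 0) := by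
    intro u hu v hv h
    rw [mem_Ioi] at hu hv
    field_simp at h
    linarith
  have hsub := integral_image_eq_integral_abs_deriv_smul measurableSet_Ioi hderiv hinj
    (fun x => x ^ (c - 1) * (1 - x) ^ (-c))
  rw [himg] at hsub
  have hlhs : ∫ x in Ioo (0:ℝ) 1, x ^ (c - 1) * (1 - x) ^ (-c)
      = ∫ x in (0:ℝ)..1, x ^ (c - 1) * (1 - x) ^ (-c) := by
    rw [intervalIntegral.integral_of_le zero_le_one, ← MeasureTheory.integral_Ioc_eq_integral_Ioo]
  have hrhs : (∫ u in Ioi (0:ℝ), |1 / (1 + u)^2| • ((u / (1 + u)) ^ (c - 1) * (1 - u / (1 + u)) ^ (-c)))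
      = ∫ u in Ioi (0:ℝ), u ^ (c - 1) / (1 + u) := by
    refine setIntegral_congr_fun measurableSet_Ioi (fun u hu => ?_)
    rw [mem_Ioi] at hu
    have h1u : (0:ℝ) < 1 + u := by linarith
    have e1 : (1 : ℝ) - u / (1 + u) = 1 / (1 + u) := by field_simp; ring
    have key : ((1+u):ℝ)^(2:ℕ) * (1+u)^(c-1) = (1+u)^c * (1+u) := by
      have h := Real.rpow_add h1u c 1
      rw [Real.rpow_one] at h
      rw [← h, ← Real.rpow_natCast (1+u) 2, ← Real.rpow_add h1u]
      congr 1
      push_cast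
      ring
    rw [e1, smul_eq_mul, abs_of_pos (by positivity : (0:ℝ) < 1/(1+u)^2),
      Real.div_rpow hu.le h1u.le, one_div ((1+u):ℝ), Real.inv_rpow h1u.le,
      Real.rpow_neg h1u.le, inv_inv]
    have hA : ((1+u):ℝ) ≠ 0 := h1u.ne'
    have hAc1 : ((1+u):ℝ)^(c-1) ≠ 0 := (Real.rpow_pos_of_pos h1u _).ne'
    have hc' : ((1+u):ℝ)^c = (1+u)^(c-1) * (1+u) := by
      rw [← Real.rpow_add_one hA]; ring_nf
    rw [hc']
    field_simp
  rw [← hrhs, ← hsub, hlhs, hreal]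

-- main A value
lemma aux_A (s : ℝ) (hs1 : -1 < s) (hs0 : s < 0) :
    ∫ t in Ioi (0:ℝ), t ^ (-s) / (1 + t^2) = π / (2 * Real.cos (π * s / 2)) := by
  set c : ℝ := (1 - s)/2 with hc_def
  have hc0 : 0 < c := by simp only [hc_def]; linarith
  have hc1 : c < 1 := by simp only [hc_def]; linarith
  have hbeta := aux_beta hc0 hc1
  have hsub := integral_comp_rpow_Ioi_of_pos (g := fun y : ℝ => y^(c-1)/(1+y))
    (p := 2) two_pos
  have hcong : ∫ x in Ioi (0:ℝ), (2 * x ^ ((2:ℝ)-1)) • ((x^(2:ℝ))^(c-1)/(1+x^(2:ℝ)))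
      = ∫ t in Ioi (0:ℝ), 2 * (t ^ (-s) / (1 + t^2)) := by
    refine setIntegral_congr_fun measurableSet_Ioi (fun x hx => ?_)
    rw [mem_Ioi] at hx
    have e2 : x ^ (2:ℝ) = x^(2:ℕ) := by
      rw [← Real.rpow_natCast x 2]; norm_num
    rw [smul_eq_mul, ← Real.rpow_mul hx.le, e2]
    rw [show (2:ℝ) - 1 = 1 by norm_num, Real.rpow_one]
    rw [show (2:ℝ) * (c - 1) = -s - 1 by simp only [hc_def]; ring]
    have hxx : x * x^(-s-1) = x^(-s) := by
      nth_rewrite 1 [← Real.rpow_one x]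
      rw [← Real.rpow_add hx]
      norm_num
    rw [← hxx]
    ring
  rw [hcong] at hsub
  rw [MeasureTheory.integral_const_mul] at hsub
  have hsin : Real.sin (π * c) = Real.cos (π * s / 2) := by
    rw [show π * c = π/2 - π * s / 2 by simp only [hc_def]; ring, Real.sin_pi_div_two_sub]
  rw [hbeta, hsin] at hsub
  have hcosne : Real.cos (π * s / 2) ≠ 0 := by
    have h1 : -(π/2) < π * s / 2 := by nlinarith [Real.pi_pos]
    have h2 : π * s / 2 < π/2 := by nlinarith [Real.pi_pos]
    exact (Real.cos_pos_of_mem_Ioo ⟨h1, h2⟩).ne'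
  field_simp at hsub ⊢
  linarith

-- pointwise bound for the error term
lemma aux_ptbd (s R : ℝ) {t : ℝ} (ht : 0 < t) :
    |t ^ (-s-1) * (Real.exp (-(R*t)) * (Real.sin R - t * Real.cos R) / (1 + t^2))|
      ≤ 2 * (t ^ (-s-1) * Real.exp (-(R*t))) := by
  have h1 : |Real.sin R - t * Real.cos R| ≤ 1 + t := by
    calc |Real.sin R - t * Real.cos R| ≤ |Real.sin R| + |t * Real.cos R| := abs_sub _ _
    _ ≤ 1 + t := by
      have := Real.abs_sin_le_one R
      have h2 : |t * Real.cos R| ≤ t := by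
        rw [abs_mul, abs_of_pos ht]
        nlinarith [Real.abs_cos_le_one R, abs_nonneg (Real.cos R)]
      linarith
  have h2 : (1:ℝ) + t ≤ 2 * (1 + t^2) := by nlinarith
  have hden : (0:ℝ) < 1 + t^2 := by positivity
  rw [abs_mul, abs_div, abs_of_nonneg (Real.rpow_nonneg ht.le _), abs_mul,
    abs_of_pos (Real.exp_pos _), abs_of_pos hden]
  have hbd : Real.exp (-(R*t)) * |Real.sin R - t * Real.cos R| / (1 + t^2)
      ≤ 2 * Real.exp (-(R*t)) := by
    rw [div_le_iff₀ hden]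
    have := mul_le_mul_of_nonneg_left (h1.trans h2) (Real.exp_pos (-(R*t))).le
    nlinarith [this]
  calc t ^ (-s-1) * (Real.exp (-(R*t)) * |Real.sin R - t * Real.cos R| / (1 + t^2))
      ≤ t ^ (-s-1) * (2 * Real.exp (-(R*t))) :=
        mul_le_mul_of_nonneg_left hbd (Real.rpow_nonneg ht.le _)
    _ = 2 * (t ^ (-s-1) * Real.exp (-(R*t))) := by ring

lemma aux_err_integrable (s : ℝ) (hs0 : s < 0) {R : ℝ} (hR : 0 < R) :
    IntegrableOn (fun t : ℝ =>
      t ^ (-s-1) * (Real.exp (-(R*t)) * (Real.sin R - t * Real.cos R) / (1 + t^2))) (Ioi 0) := by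
  have hker := aux_ker_integrable (a := -s) (x := R) (by linarith) hR
  refine Integrable.mono' (hker.const_mul 2) ?_ ?_
  · have h1 : Measurable fun t : ℝ => t ^ (-s-1) := by measurability
    have h2 : Continuous fun t : ℝ =>
        Real.exp (-(R*t)) * (Real.sin R - t*Real.cos R) / (1+t^2) := by
      apply Continuous.div
      · continuity
      · continuity
      · intro t; positivity
    exact (h1.mul h2.measurable).aestronglyMeasurable
  · filter_upwards [ae_restrict_mem measurableSet_Ioi] with t ht
    rw [mem_Ioi] at ht
    calc ‖t ^ (-s-1) * (Real.exp (-(R*t)) * (Real.sin R - t * Real.cos R) / (1 + t^2))‖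
        = |t ^ (-s-1) * (Real.exp (-(R*t)) * (Real.sin R - t * Real.cos R) / (1 + t^2))| := rfl
      _ ≤ 2 * (t ^ (-s-1) * Real.exp (-(R*t))) := aux_ptbd s R ht

lemma aux_err_bound (s : ℝ) (hs0 : s < 0) {R : ℝ} (hR : 0 < R) :
    |∫ t in Ioi (0:ℝ),
        t ^ (-s-1) * (Real.exp (-(R*t)) * (Real.sin R - t * Real.cos R) / (1 + t^2))|
      ≤ 2 * Real.Gamma (-s) * R ^ s := by
  have hker := aux_ker_integrable (a := -s) (x := R) (by linarith) hR
  have h := MeasureTheory.norm_integral_le_of_norm_le (hker.const_mul 2)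
    (f := fun t : ℝ =>
      t ^ (-s-1) * (Real.exp (-(R*t)) * (Real.sin R - t * Real.cos R) / (1 + t^2)))
    ?_
  · rw [MeasureTheory.integral_const_mul, aux_ker s hs0 hR] at h
    calc |∫ t in Ioi (0:ℝ), t ^ (-s-1) * (Real.exp (-(R*t)) * (Real.sin R - t * Real.cos R) / (1 + t^2))| ≤ 2 * (Real.Gamma (-s) * R ^ s) := h
      _ = 2 * Real.Gamma (-s) * R ^ s := by ring
  · filter_upwards [ae_restrict_mem measurableSet_Ioi] with t ht
    exact aux_ptbd s R ht

lemma aux_A_integrable (s : ℝ) (hs1 : -1 < s) (hs0 : s < 0) :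
    IntegrableOn (fun t : ℝ => t ^ (-s) / (1 + t^2)) (Ioi 0) := by
  have h1 : IntegrableOn (fun t : ℝ => t ^ (-s) / (1 + t^2)) (Ioc 0 1) := by
    have hint : IntegrableOn (fun t : ℝ => t ^ (-s)) (Ioc 0 1) := by
      have := intervalIntegral.intervalIntegrable_rpow' (a := 0) (b := 1)
        (r := -s) (by linarith)
      rwa [intervalIntegrable_iff_integrableOn_Ioc_of_le zero_le_one] at this
    refine Integrable.mono' hint ?_ ?_
    · exact Measurable.aestronglyMeasurable (by measurability)
    · filter_upwards [ae_restrict_mem measurableSet_Ioc] with t ht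
      have ht0 : 0 < t := ht.1
      have hden : (1:ℝ) ≤ 1 + t^2 := by nlinarith
      rw [Real.norm_eq_abs, abs_div, abs_of_nonneg (Real.rpow_nonneg ht0.le _),
        abs_of_pos (by positivity : (0:ℝ) < 1 + t^2)]
      exact div_le_self (Real.rpow_nonneg ht0.le _) hden
  have h2 : IntegrableOn (fun t : ℝ => t ^ (-s) / (1 + t^2)) (Ioi 1) := by
    have hint : IntegrableOn (fun t : ℝ => t ^ (-s-2)) (Ioi 1) :=
      integrableOn_Ioi_rpow_of_lt (by linarith) one_pos
    refine Integrable.mono' hint ?_ ?_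
    · exact Measurable.aestronglyMeasurable (by measurability)
    · filter_upwards [ae_restrict_mem measurableSet_Ioi] with t ht
      rw [mem_Ioi] at ht
      have ht0 : (0:ℝ) < t := by linarith
      have key : t ^ (-s-2) = t ^ (-s) / t^2 := by
        rw [Real.rpow_sub ht0, ← Real.rpow_natCast t 2]
        norm_num
      rw [Real.norm_eq_abs, abs_div, abs_of_nonneg (Real.rpow_nonneg ht0.le _),
        abs_of_pos (by positivity : (0:ℝ) < 1 + t^2), key]
      apply div_le_div_of_nonneg_left (Real.rpow_nonneg ht0.le _) (by positivity)
      nlinarith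
  have := h1.union h2
  rwa [Ioc_union_Ioi_eq_Ioi zero_le_one] at this

set_option maxHeartbeats 2000000 in
lemma aux_fubini (s : ℝ) (hs1 : -1 < s) (hs0 : s < 0) {R : ℝ} (hR : 0 < R) :
    ∫ x in (0:ℝ)..R, x ^ s * Real.cos x
      = (Real.Gamma (-s))⁻¹ * ∫ t in Ioi (0:ℝ),
          t ^ (-s-1) * ((t + Real.exp (-(R*t)) * (Real.sin R - t * Real.cos R)) / (1 + t^2)) := by
  have hG : 0 < Real.Gamma (-s) := Real.Gamma_pos_of_pos (by linarith)
  have h0 : Measurable fun t : ℝ => t ^ (-s-1) := by measurability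
  have hmeasF : AEStronglyMeasurable
      (Function.uncurry fun x t : ℝ => t ^ (-s-1) * Real.exp (-(x*t)) * Real.cos x)
      ((volume.restrict (Ioc 0 R)).prod (volume.restrict (Ioi 0))) := by
    have hcont : Continuous fun p : ℝ × ℝ => Real.exp (-(p.1*p.2)) := by continuity
    exact (((h0.comp measurable_snd).mul hcont.measurable).mul
      ((Real.continuous_cos.comp continuous_fst).measurable)).aestronglyMeasurable
  have hxint : IntegrableOn (fun x : ℝ => Real.Gamma (-s) * x ^ s) (Ioc 0 R) := by
    have h1 : IntegrableOn (fun x : ℝ => x ^ s) (Ioc 0 R) := by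
      have := intervalIntegral.intervalIntegrable_rpow' (a := 0) (b := R) (r := s) hs1
      rwa [intervalIntegrable_iff_integrableOn_Ioc_of_le hR.le] at this
    exact h1.const_mul _
  have hval : ∀ x : ℝ, 0 < x → ∫ t in Ioi (0:ℝ), ‖t ^ (-s-1) * Real.exp (-(x*t)) * Real.cos x‖
      = |Real.cos x| * (Real.Gamma (-s) * x ^ s) := by
    intro x hx0
    have : ∀ t ∈ Ioi (0:ℝ), ‖t ^ (-s-1) * Real.exp (-(x*t)) * Real.cos x‖
        = t ^ (-s-1) * Real.exp (-(x*t)) * |Real.cos x| := by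
      intro t ht
      rw [mem_Ioi] at ht
      rw [Real.norm_eq_abs, abs_mul, abs_mul, abs_of_nonneg (Real.rpow_nonneg ht.le _),
        abs_of_pos (Real.exp_pos _)]
    rw [setIntegral_congr_fun measurableSet_Ioi this,
      MeasureTheory.integral_mul_const, aux_ker s hs0 hx0]
    ring
  have hInt : Integrable
      (Function.uncurry fun x t : ℝ => t ^ (-s-1) * Real.exp (-(x*t)) * Real.cos x)
      ((volume.restrict (Ioc 0 R)).prod (volume.restrict (Ioi 0))) := by
    rw [MeasureTheory.integrable_prod_iff hmeasF]
    constructor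
    · filter_upwards [ae_restrict_mem measurableSet_Ioc] with x hx
      simp only [Function.uncurry_apply_pair]
      exact ((aux_ker_integrable (a := -s) (by linarith) hx.1).mul_const _)
    · refine Integrable.mono' hxint hmeasF.norm.integral_prod_right' ?_
      simp only [Function.uncurry_apply_pair]
      filter_upwards [ae_restrict_mem measurableSet_Ioc] with x hx
      have hx0 : 0 < x := hx.1
      have hnn : 0 ≤ ∫ t in Ioi (0:ℝ), ‖t ^ (-s-1) * Real.exp (-(x*t)) * Real.cos x‖ :=
        MeasureTheory.integral_nonneg (fun t => norm_nonneg _)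
      rw [Real.norm_eq_abs, abs_of_nonneg hnn]
      show (∫ t in Ioi (0:ℝ), ‖t ^ (-s-1) * Real.exp (-(x*t)) * Real.cos x‖)
        ≤ Real.Gamma (-s) * x ^ s
      rw [hval x hx0]
      have h1 : |Real.cos x| ≤ 1 := Real.abs_cos_le_one x
      have h2 : 0 ≤ Real.Gamma (-s) * x ^ s := by positivity
      nlinarith
  calc ∫ x in (0:ℝ)..R, x ^ s * Real.cos x
      = ∫ x in Ioc (0:ℝ) R, x ^ s * Real.cos x := intervalIntegral.integral_of_le hR.le
    _ = ∫ x in Ioc (0:ℝ) R, (Real.Gamma (-s))⁻¹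
          * ∫ t in Ioi (0:ℝ), t ^ (-s-1) * Real.exp (-(x*t)) * Real.cos x := by
        refine (setIntegral_congr_fun measurableSet_Ioc (fun x hx => ?_))
        have hx0 : 0 < x := hx.1
        have hinner : ∫ t in Ioi (0:ℝ), t ^ (-s-1) * Real.exp (-(x*t)) * Real.cos x
            = (Real.Gamma (-s) * x ^ s) * Real.cos x := by
          rw [MeasureTheory.integral_mul_const, aux_ker s hs0 hx0]
        rw [hinner]
        field_simp
    _ = (Real.Gamma (-s))⁻¹ * ∫ x in Ioc (0:ℝ) R,
          ∫ t in Ioi (0:ℝ), t ^ (-s-1) * Real.exp (-(x*t)) * Real.cos x :=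
        MeasureTheory.integral_const_mul _ _
    _ = (Real.Gamma (-s))⁻¹ * ∫ t in Ioi (0:ℝ),
          ∫ x in Ioc (0:ℝ) R, t ^ (-s-1) * Real.exp (-(x*t)) * Real.cos x := by
        rw [MeasureTheory.integral_integral_swap hInt]
    _ = (Real.Gamma (-s))⁻¹ * ∫ t in Ioi (0:ℝ),
          t ^ (-s-1) * ((t + Real.exp (-(R*t)) * (Real.sin R - t * Real.cos R)) / (1 + t^2)) := by
        congr 1
        refine setIntegral_congr_fun measurableSet_Ioi (fun t ht => ?_)
        have h1 : ∫ x in Ioc (0:ℝ) R, t ^ (-s-1) * Real.exp (-(x*t)) * Real.cos x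
            = t ^ (-s-1) * ∫ x in Ioc (0:ℝ) R, Real.exp (-(x*t)) * Real.cos x := by
          simp_rw [mul_assoc]
          exact MeasureTheory.integral_const_mul _ _
        rw [h1, ← intervalIntegral.integral_of_le hR.le, aux_inner]

theorem improper_integral_rpow_cos (s : ℝ) (hs1 : -1 < s) (hs0 : s < 0) :
    Tendsto (fun R : ℝ => ∫ r in (0:ℝ)..R, r ^ s * Real.cos r) atTop
      (nhds (-(Real.Gamma (1 + s)) * Real.sin (s * π / 2))) := by
  have hG : 0 < Real.Gamma (-s) := Real.Gamma_pos_of_pos (by linarith)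
  set A : ℝ := ∫ t in Ioi (0:ℝ), t ^ (-s) / (1 + t^2) with hA_def
  set err : ℝ → ℝ := fun R => ∫ t in Ioi (0:ℝ),
    t ^ (-s-1) * (Real.exp (-(R*t)) * (Real.sin R - t * Real.cos R) / (1 + t^2)) with herr_def
  have hsplit : ∀ R : ℝ, 0 < R →
      ∫ x in (0:ℝ)..R, x ^ s * Real.cos x = (Real.Gamma (-s))⁻¹ * (A + err R) := by
    intro R hR
    rw [aux_fubini s hs1 hs0 hR]
    congr 1
    rw [hA_def, herr_def, ← MeasureTheory.integral_add (aux_A_integrable s hs1 hs0)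
      (aux_err_integrable s hs0 hR)]
    refine setIntegral_congr_fun measurableSet_Ioi (fun t ht => ?_)
    rw [mem_Ioi] at ht
    have hts : t ^ (-s-1) * t = t ^ (-s) := by
      have h1 : t ^ (-s-1) * t ^ (1:ℝ) = t ^ (-s) := by
        rw [← Real.rpow_add ht]; norm_num
      simpa [Real.rpow_one] using h1
    have hden : (1:ℝ) + t^2 ≠ 0 := by positivity
    field_simp
    linear_combination hts
  have htend0 : Tendsto (fun R : ℝ => 2 * Real.Gamma (-s) * R ^ s) atTop (nhds 0) := by
    have h1 : Tendsto (fun R : ℝ => R ^ s) atTop (nhds 0) := by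
      have := tendsto_rpow_neg_atTop (y := -s) (by linarith)
      simpa using this
    have := h1.const_mul (2 * Real.Gamma (-s))
    simpa using this
  have herr : Tendsto err atTop (nhds 0) := by
    apply squeeze_zero_norm' ?_ htend0
    filter_upwards [eventually_gt_atTop 0] with R hR
    rw [Real.norm_eq_abs]
    exact aux_err_bound s hs0 hR
  have hlim : Tendsto (fun R => (Real.Gamma (-s))⁻¹ * (A + err R)) atTop
      (nhds ((Real.Gamma (-s))⁻¹ * (A + 0))) :=
    (tendsto_const_nhds.add herr).const_mul _
  rw [add_zero] at hlim
  have hval : (Real.Gamma (-s))⁻¹ * A = -(Real.Gamma (1 + s)) * Real.sin (s * π / 2) := by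
    rw [hA_def, aux_A s hs1 hs0]
    have hrefl := Real.Gamma_mul_Gamma_one_sub (1+s)
    rw [show (1:ℝ) - (1+s) = -s by ring] at hrefl
    have hsin1 : Real.sin (π * (1+s)) = - Real.sin (π * s) := by
      rw [mul_add, mul_one, Real.sin_add]
      simp
    rw [hsin1] at hrefl
    have hsin2 : Real.sin (π * s) = 2 * Real.sin (π*s/2) * Real.cos (π*s/2) := by
      rw [← Real.sin_two_mul]; ring_nf
    have hpi := Real.pi_pos
    have hs2a : -(π/2) < π * s / 2 := by nlinarith
    have hs2b : π * s / 2 < 0 := by nlinarith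
    have hcosne : Real.cos (π * s / 2) ≠ 0 :=
      (Real.cos_pos_of_mem_Ioo ⟨hs2a, by linarith⟩).ne'
    have hsinne : Real.sin (π * s / 2) ≠ 0 := by
      have := Real.sin_neg_of_neg_of_neg_pi_lt hs2b (by linarith)
      linarith
    rw [hsin2] at hrefl
    have hGne : Real.Gamma (-s) ≠ 0 := hG.ne'
    rw [show s * π / 2 = π * s / 2 by ring]
    rw [inv_mul_eq_iff_eq_mul₀ hGne, show Real.Gamma (-s) * (-Real.Gamma (1 + s) * Real.sin (π * s / 2)) = -(Real.Gamma (1 + s) * Real.Gamma (-s)) * Real.sin (π * s / 2) by ring, hrefl]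
    field_simp
  rw [← hval]
  refine hlim.congr' ?_
  filter_upwards [eventually_gt_atTop 0] with R hR
  exact (hsplit R hR).symm
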